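/- For any coprime integers e, e' ≥ 2, gcd(2^e + 1, 2^{e'} + 1) divides 3. -/

import Mathlib

theorem gcd_fermat_fermat_dvd_three (e e' : ℕ) (he : 2 ≤ e) (he' : 2 ≤ e')
    (hcop : Nat.Coprime e e') :
    Nat.gcd (2 ^ e + 1) (2 ^ e' + 1) ∣ 3 := by
  set d := Nat.gcd (2 ^ e + 1) (2 ^ e' + 1) with hd
  have hdpos : 0 < d := Nat.gcd_pos_of_pos_left _ (Nat.succ_pos _)
  haveI : NeZero d := ⟨hdpos.ne'⟩
  have h1 : ((2 ^ e + 1 : ℕ) : ZMod d) = 0 := by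
    rw [ZMod.natCast_eq_zero_iff]; exact Nat.gcd_dvd_left _ _
  have h2 : ((2 ^ e' + 1 : ℕ) : ZMod d) = 0 := by
    rw [ZMod.natCast_eq_zero_iff]; exact Nat.gcd_dvd_right _ _
  push_cast at h1 h2
  have h1' : (2 : ZMod d) ^ (2 * e) = 1 := by
    rw [mul_comm, pow_mul]
    have : (2 : ZMod d) ^ e = -1 := eq_neg_of_add_eq_zero_left h1
    rw [this, neg_one_sq]
  have h2' : (2 : ZMod d) ^ (2 * e') = 1 := by
    rw [mul_comm, pow_mul]
    have : (2 : ZMod d) ^ e' = -1 := eq_neg_of_add_eq_zero_left h2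
    rw [this, neg_one_sq]
  have hg := pow_gcd_eq_one.mpr ⟨h1', h2'⟩
  rw [Nat.gcd_mul_left, hcop, mul_one] at hg
  have h3 : ((3 : ℕ) : ZMod d) = 0 := by
    have : (4 : ZMod d) = 1 := by norm_num at hg ⊢; linear_combination hg
    push_cast
    linear_combination this
  rwa [ZMod.natCast_eq_zero_iff] at h3
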